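/- Let Ẑ ⊆ ℝ^d be a nonempty closed convex set, G : ℝ^d → ℝ^d a continuous map, and for z ∈ Ẑ set F(z) = {G(z) + w : w ∈ N_{Ẑ}(z)}. Let Ẑ* = {z ∈ Ẑ : 0 ∈ F(z)} and assume Ẑ* ≠ ∅. Assume local metric subregularity at every z* ∈ Ẑ*: for each z* ∈ Ẑ* there exist ε > 0 and ρ > 0 such that infDist(z, Ẑ*) ≤ ρ·infDist(0, F(z)) for all z ∈ Ẑ with ‖z - z*‖ < ε. Then for every compact set Z̄ ⊆ Ẑ with Z̄ ∩ Ẑ* ≠ ∅ there exists a constant ρ(Z̄) > 0 such that infDist(z, Ẑ*) ≤ ρ(Z̄)·infDist(0, F(z)) for all z ∈ Z̄. -/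
import Mathlib


open scoped RealInnerProductSpace
open Filter Metric Topology

/-- Globalization of metric subregularity on compact sets.  Let
`Ẑ ⊆ ℝ^d` be nonempty closed convex, `G` continuous, `F z = G z + N_Ẑ(z)` on `Ẑ`,
`Ẑ* = {z ∈ Ẑ : 0 ∈ F z}` nonempty, and assume local metric subregularity at every
`z* ∈ Ẑ*`.  Then for every compact `Z̄ ⊆ Ẑ` meeting `Ẑ*` there exists `ρ(Z̄) > 0` with
`infDist(z, Ẑ*) ≤ ρ(Z̄)·infDist(0, F z)` for all `z ∈ Z̄`. -/
theorem stmt_11 {d : ℕ}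
    (Zhat : Set (EuclideanSpace ℝ (Fin d)))
    (hZne : Zhat.Nonempty) (hZclosed : IsClosed Zhat) (hZconv : Convex ℝ Zhat)
    (G : EuclideanSpace ℝ (Fin d) → EuclideanSpace ℝ (Fin d)) (hG : Continuous G)
    (F : EuclideanSpace ℝ (Fin d) → Set (EuclideanSpace ℝ (Fin d)))
    (hF : ∀ z ∈ Zhat, F z =
      {u | ∃ w, (∀ z' ∈ Zhat, ⟪w, z' - z⟫ ≤ 0) ∧ u = G z + w})
    (Zstar : Set (EuclideanSpace ℝ (Fin d)))
    (hZstar : Zstar = {z | z ∈ Zhat ∧ (0 : EuclideanSpace ℝ (Fin d)) ∈ F z})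
    (hZstarne : Zstar.Nonempty)
    (hsubreg : ∀ zs ∈ Zstar, ∃ ε : ℝ, 0 < ε ∧ ∃ ρ : ℝ, 0 < ρ ∧
      ∀ z ∈ Zhat, ‖z - zs‖ < ε →
        Metric.infDist z Zstar ≤ ρ * Metric.infDist 0 (F z)) :
    ∀ Zbar ⊆ Zhat, IsCompact Zbar → (Zbar ∩ Zstar).Nonempty →
      ∃ ρZ : ℝ, 0 < ρZ ∧ ∀ z ∈ Zbar,
        Metric.infDist z Zstar ≤ ρZ * Metric.infDist 0 (F z) := by
  intro Zbar hsub hcpt hmeet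
  by_contra hcon
  push_neg at hcon
  -- choose a bad point for each n
  have hsel : ∀ n : ℕ, ∃ z ∈ Zbar,
      ((n : ℝ) + 1) * Metric.infDist 0 (F z) < Metric.infDist z Zstar := by
    intro n
    obtain ⟨z, hz, h⟩ := hcon ((n : ℝ) + 1) (by positivity)
    exact ⟨z, hz, h⟩
  choose z hzmem hzlt using hsel
  -- bound D on infDist to Zstar over Zbar
  obtain ⟨D, hD⟩ := hcpt.exists_bound_of_continuousOn
    ((continuous_infDist_pt Zstar).continuousOn)
  have hD' : ∀ x ∈ Zbar, Metric.infDist x Zstar ≤ D := by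
    intro x hx
    have := hD x hx
    rwa [Real.norm_of_nonneg Metric.infDist_nonneg] at this
  obtain ⟨x0, hx0⟩ := hmeet
  have hD0 : 0 ≤ D := le_trans Metric.infDist_nonneg (hD' _ hx0.1)
  -- bound on G over Zbar
  obtain ⟨MG, hMG⟩ := hcpt.exists_bound_of_continuousOn hG.continuousOn
  -- F (z n) is nonempty
  have hFz : ∀ n, F (z n) =
      {u | ∃ w, (∀ z' ∈ Zhat, ⟪w, z' - z n⟫ ≤ 0) ∧ u = G (z n) + w} :=
    fun n => hF _ (hsub (hzmem n))
  have hFne : ∀ n, (F (z n)).Nonempty := by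
    intro n
    rw [hFz n]
    exact ⟨G (z n), 0, fun z' _ => by simp, by simp⟩
  -- infDist 0 (F (z n)) ≤ D / (n+1)
  have hφ : ∀ n : ℕ, Metric.infDist 0 (F (z n)) < (D + 1) / ((n : ℝ) + 1) := by
    intro n
    have h1 : ((n : ℝ) + 1) * Metric.infDist 0 (F (z n)) < D + 1 :=
      lt_of_lt_of_le (lt_of_lt_of_le (hzlt n) (hD' _ (hzmem n))) (by linarith)
    rw [lt_div_iff₀ (by positivity)]
    linarith [mul_comm ((n : ℝ) + 1) (Metric.infDist 0 (F (z n)))]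
  -- select approximate minimizers
  have hselw : ∀ n : ℕ, ∃ w, (∀ z' ∈ Zhat, ⟪w, z' - z n⟫ ≤ 0) ∧
      ‖G (z n) + w‖ < (D + 1) / ((n : ℝ) + 1) := by
    intro n
    obtain ⟨y, hy, hdy⟩ := (Metric.infDist_lt_iff (hFne n)).mp (hφ n)
    rw [hFz n] at hy
    obtain ⟨w, hw, rfl⟩ := hy
    refine ⟨w, hw, ?_⟩
    rwa [dist_zero_left] at hdy
  choose w hwN hwnorm using hselw
  -- w is bounded
  set M : ℝ := D + 1 + MG with hM
  have hwball : ∀ n, w n ∈ Metric.closedBall (0 : EuclideanSpace ℝ (Fin d)) M := by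
    intro n
    rw [Metric.mem_closedBall, dist_zero_right]
    have h1 : ‖G (z n) + w n‖ ≤ D + 1 := by
      refine le_trans (hwnorm n).le ?_
      rw [div_le_iff₀ (by positivity)]
      nlinarith [Nat.cast_nonneg (α := ℝ) n]
    have h2 : ‖w n‖ ≤ ‖G (z n) + w n‖ + ‖G (z n)‖ := by
      calc ‖w n‖ = ‖(G (z n) + w n) - G (z n)‖ := by rw [add_sub_cancel_left]
        _ ≤ ‖G (z n) + w n‖ + ‖G (z n)‖ := norm_sub_le _ _
    have := hMG (z n) (hzmem n)
    linarith
  -- compactness of Zbar × closedBall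
  have hKcpt : IsCompact (Zbar ×ˢ Metric.closedBall (0 : EuclideanSpace ℝ (Fin d)) M) :=
    hcpt.prod (isCompact_closedBall _ _)
  obtain ⟨⟨zb, wb⟩, hzbwb, σ, hσ, hps⟩ :=
    hKcpt.tendsto_subseq (x := fun n => (z n, w n)) (fun n => ⟨hzmem n, hwball n⟩)
  have hzb : Tendsto (fun k => z (σ k)) atTop (𝓝 zb) :=
    (continuous_fst.tendsto _).comp hps
  have hwb : Tendsto (fun k => w (σ k)) atTop (𝓝 wb) :=
    (continuous_snd.tendsto _).comp hps
  have hzbZ : zb ∈ Zbar := hzbwb.1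
  -- G zb + wb = 0
  have hnormlim : Tendsto (fun k => ‖G (z (σ k)) + w (σ k)‖) atTop (𝓝 ‖G zb + wb‖) :=
    (((hG.tendsto _).comp hzb).add hwb).norm
  have hzero : Tendsto (fun k => ‖G (z (σ k)) + w (σ k)‖) atTop (𝓝 0) := by
    apply squeeze_zero (fun k => norm_nonneg _) (g := fun k : ℕ => (D + 1) / ((k : ℝ) + 1))
    · intro k
      refine le_trans (hwnorm (σ k)).le ?_
      have hle : ((k : ℝ) + 1) ≤ ((σ k : ℝ) + 1) := by
        exact_mod_cast Nat.succ_le_succ hσ.le_apply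
      exact div_le_div_of_nonneg_left (by linarith) (by positivity) hle
    · have := tendsto_one_div_add_atTop_nhds_zero_nat.const_mul (D + 1)
      simpa [div_eq_mul_inv, mul_comm] using this
  have hGzw : G zb + wb = 0 := by
    have := tendsto_nhds_unique hnormlim hzero
    exact norm_eq_zero.mp this
  -- wb is in the normal cone at zb
  have hwbN : ∀ z' ∈ Zhat, ⟪wb, z' - zb⟫ ≤ 0 := by
    intro z' hz'
    have hlim : Tendsto (fun k => ⟪w (σ k), z' - z (σ k)⟫) atTop (𝓝 ⟪wb, z' - zb⟫) :=
      hwb.inner (tendsto_const_nhds.sub hzb)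
    exact le_of_tendsto hlim (Filter.Eventually.of_forall fun k => hwN (σ k) z' hz')
  -- zb ∈ Zstar
  have hzbstar : zb ∈ Zstar := by
    rw [hZstar]
    refine ⟨hsub hzbZ, ?_⟩
    rw [hF zb (hsub hzbZ)]
    exact ⟨wb, hwbN, hGzw.symm⟩
  -- local subregularity at zb gives contradiction
  obtain ⟨ε, hε, ρ, hρ, hloc⟩ := hsubreg zb hzbstar
  have hev1 : ∀ᶠ k in atTop, ‖z (σ k) - zb‖ < ε := by
    have := hzb.eventually (Metric.ball_mem_nhds zb hε)
    filter_upwards [this] with k hk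
    rwa [dist_eq_norm] at hk
  have hev2 : ∀ᶠ k in atTop, ρ ≤ (σ k : ℝ) + 1 := by
    filter_upwards [Filter.eventually_ge_atTop ⌈ρ⌉₊] with k hk
    calc ρ ≤ (⌈ρ⌉₊ : ℝ) := Nat.le_ceil ρ
      _ ≤ (k : ℝ) := by exact_mod_cast hk
      _ ≤ (σ k : ℝ) := by exact_mod_cast hσ.le_apply
      _ ≤ (σ k : ℝ) + 1 := by linarith
  obtain ⟨k, hk1, hk2⟩ := (hev1.and hev2).exists
  have h1 := hloc (z (σ k)) (hsub (hzmem (σ k))) hk1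
  have h2 : ρ * Metric.infDist 0 (F (z (σ k))) ≤
      ((σ k : ℝ) + 1) * Metric.infDist 0 (F (z (σ k))) :=
    mul_le_mul_of_nonneg_right hk2 Metric.infDist_nonneg
  exact absurd (lt_of_le_of_lt (h1.trans h2) (hzlt (σ k))) (lt_irrefl _)
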